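/- Let k be a field and let n ≥ 4 and 1 ≤ h ≤ n − 3 be integers. Let z_{1,1}, …, z_{1,n} and z_{2,1}, …, z_{2,n} be elements of k satisfying e_n^j(z_{1,1}, …, z_{1,n}) = e_n^j(z_{2,1}, …, z_{2,n}) for all 1 ≤ j ≤ n − h − 1. For i = 1, 2 let A_i be the (n−h−1) × n matrix whose (d, j)-entry (0 ≤ d ≤ n−h−2, 1 ≤ j ≤ n) is the elementary symmetric polynomial of degree d in the n − 1 elements z_{i,1}, …, z_{i,n} with z_{i,j} omitted. Then the (n−h−1) × 2n block matrix (A_1 | −A_2) has rank strictly less than n − h − 1 if and only if the set {z_{1,1}, …, z_{1,n}, z_{2,1}, …, z_{2,n}} has at most n − h − 2 distinct elements. -/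

import Mathlib

open Finset Polynomial Matrix

lemma esymm_cons {k : Type*} [CommRing k] (a : k) (s : Multiset k) (d : ℕ) :
    (a ::ₘ s).esymm (d + 1) = s.esymm (d + 1) + a * s.esymm d := by
  simp [Multiset.esymm, Multiset.powersetCard_cons, Multiset.map_map, Function.comp_def,
    Multiset.sum_map_mul_left]

lemma rank_lt_iff_exists {k : Type*} [Field k] {m : ℕ} {α : Type*} [Fintype α]
    (B : Matrix (Fin m) α k) :
    B.rank < m ↔ ∃ c : Fin m → k, c ≠ 0 ∧ Matrix.vecMul c B = 0 := by
  rw [← Matrix.rank_transpose]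
  have hrn := LinearMap.finrank_range_add_finrank_ker (Matrix.mulVecLin Bᵀ)
  have hd : Module.finrank k (Fin m → k) = m := by simp
  rw [hd] at hrn
  have hrk : Bᵀ.rank = Module.finrank k (LinearMap.range (Matrix.mulVecLin Bᵀ)) := rfl
  constructor
  · intro hlt
    have hker : LinearMap.ker (Matrix.mulVecLin Bᵀ) ≠ ⊥ := by
      intro hbot
      rw [hbot] at hrn
      simp at hrn
      omega
    obtain ⟨c, hc, hc0⟩ := Submodule.ne_bot_iff _ |>.mp hker
    refine ⟨c, hc0, ?_⟩
    rw [LinearMap.mem_ker, Matrix.mulVecLin_apply, Matrix.mulVec_transpose] at hc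
    exact hc
  · rintro ⟨c, hc0, hc⟩
    have hker : LinearMap.ker (Matrix.mulVecLin Bᵀ) ≠ ⊥ := by
      rw [Submodule.ne_bot_iff]
      exact ⟨c, by rw [LinearMap.mem_ker, Matrix.mulVecLin_apply,
        Matrix.mulVec_transpose]; exact hc, hc0⟩
    have hpos : 0 < Module.finrank k (LinearMap.ker (Matrix.mulVecLin Bᵀ)) := by
      rcases Nat.eq_zero_or_pos (Module.finrank k (LinearMap.ker (Matrix.mulVecLin Bᵀ))) with h | h
      · exact absurd (Submodule.finrank_eq_zero.mp h) hker
      · exact h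
    omega

lemma esymm_eq_sum {k : Type*} [CommRing k] (a : k) (s : Multiset k) (d : ℕ) :
    s.esymm d = ∑ t ∈ Finset.range (d + 1), (-a) ^ t * (a ::ₘ s).esymm (d - t) := by
  induction d with
  | zero => simp [Multiset.esymm]
  | succ d ih =>
    rw [Finset.sum_range_succ']
    have h1 : ∀ t ∈ Finset.range (d + 1),
        (-a) ^ (t + 1) * (a ::ₘ s).esymm (d + 1 - (t + 1))
          = -a * ((-a) ^ t * (a ::ₘ s).esymm (d - t)) := by
      intro t ht
      rw [Nat.add_sub_add_right, pow_succ]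
      ring
    rw [Finset.sum_congr rfl h1, ← Finset.mul_sum, ← ih]
    have := esymm_cons a s d
    simp only [pow_zero, one_mul, Nat.sub_zero]
    linear_combination -this

lemma key_sum {k : Type*} [CommRing k] (m : ℕ) (c : Fin m → k) (a : k) (s : Multiset k) :
    ∑ d : Fin m, c d * s.esymm d
      = ∑ t : Fin m, (-a) ^ (t : ℕ) *
          ∑ d : Fin m, (if (t : ℕ) ≤ (d : ℕ) then (a ::ₘ s).esymm ((d : ℕ) - t) else 0) * c d := by
  have step1 : ∀ d : Fin m, c d * s.esymm d
      = ∑ t ∈ Finset.range m,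
          (if (t : ℕ) ≤ (d : ℕ) then (-a) ^ t * ((a ::ₘ s).esymm ((d : ℕ) - t) * c d) else 0) := by
    intro d
    rw [esymm_eq_sum a s d, Finset.mul_sum]
    rw [← Finset.sum_subset (Finset.range_subset_range.mpr (by omega : (d : ℕ) + 1 ≤ m))
      (fun t _ ht => if_neg (by simp only [Finset.mem_range] at ht; omega))]
    exact Finset.sum_congr rfl fun t ht => by
      rw [if_pos (by simp only [Finset.mem_range] at ht; omega)]; ring
  calc ∑ d : Fin m, c d * s.esymm d
      = ∑ d : Fin m, ∑ t ∈ Finset.range m,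
          (if (t : ℕ) ≤ (d : ℕ) then (-a) ^ t * ((a ::ₘ s).esymm ((d : ℕ) - t) * c d) else 0) :=
        Finset.sum_congr rfl fun d _ => step1 d
    _ = ∑ t ∈ Finset.range m, ∑ d : Fin m,
          (if (t : ℕ) ≤ (d : ℕ) then (-a) ^ t * ((a ::ₘ s).esymm ((d : ℕ) - t) * c d) else 0) :=
        Finset.sum_comm
    _ = ∑ t : Fin m, ∑ d : Fin m,
          (if (t : ℕ) ≤ (d : ℕ) then (-a) ^ (t : ℕ) * ((a ::ₘ s).esymm ((d : ℕ) - t) * c d) else 0) :=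
        (Fin.sum_univ_eq_sum_range _ m).symm
    _ = ∑ t : Fin m, (-a) ^ (t : ℕ) *
          ∑ d : Fin m, (if (t : ℕ) ≤ (d : ℕ) then (a ::ₘ s).esymm ((d : ℕ) - t) else 0) * c d := by
        refine Finset.sum_congr rfl fun t _ => ?_
        rw [Finset.mul_sum]
        refine Finset.sum_congr rfl fun d _ => ?_
        split_ifs <;> ring

/-- Given `z 0, z 1 : Fin n → k` with matching elementary symmetric values in
degrees `1, …, n - h - 1`, the Jacobian block matrix `(A₁ | -A₂)` has rank strictly less than
`n - h - 1` if and only if `{z 0 j, z 1 j}` has at most `n - h - 2` distinct elements, where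
`A i` is the `(n-h-1) × n` matrix whose `(d, j)` entry is the degree-`d` elementary symmetric
polynomial of `z i` with the `j`-th coordinate omitted. -/
theorem rank_jacobian_lt_iff {k : Type*} [Field k] (n h : ℕ) (hn : 4 ≤ n) (hh1 : 1 ≤ h)
    (hh2 : h ≤ n - 3) (z : Fin 2 → Fin n → k)
    (hz : ∀ j : ℕ, 1 ≤ j → j ≤ n - h - 1 →
      (Finset.univ.val.map (z 0)).esymm j = (Finset.univ.val.map (z 1)).esymm j) :
    (Matrix.fromCols
        (Matrix.of fun (d : Fin (n - h - 1)) (j : Fin n) =>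
          ((Finset.univ.erase j).val.map (z 0)).esymm (d : ℕ))
        (-(Matrix.of fun (d : Fin (n - h - 1)) (j : Fin n) =>
          ((Finset.univ.erase j).val.map (z 1)).esymm (d : ℕ)))).rank < n - h - 1 ↔
      Set.ncard (Set.range (z 0) ∪ Set.range (z 1)) ≤ n - h - 2 := by
  classical
  have hm2 : 2 ≤ n - h - 1 := by omega
  set m := n - h - 1 with hm
  set E : ℕ → k := fun u => (Finset.univ.val.map (z 0)).esymm u with hEdef
  have hE : ∀ (i : Fin 2) (u : ℕ), u ≤ m → (Finset.univ.val.map (z i)).esymm u = E u := by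
    intro i u hu
    fin_cases i
    · rfl
    · cases u with
      | zero => simp [hEdef, Multiset.esymm]
      | succ v => exact (hz (v + 1) (by omega) hu).symm
  set M : Matrix (Fin m) (Fin m) k :=
    Matrix.of (fun t d : Fin m => if (t : ℕ) ≤ (d : ℕ) then E ((d : ℕ) - (t : ℕ)) else 0)
    with hMdef
  have hMdiag : ∀ i : Fin m, M i i = 1 := by
    intro i
    simp [hMdef, hEdef, Multiset.esymm]
  have hMdet : M.det = 1 := by
    rw [Matrix.det_of_upperTriangular]
    · simp [hMdiag]
    · intro i j hij
      have hji : (j : ℕ) < (i : ℕ) := hij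
      simp only [hMdef, Matrix.of_apply]
      rw [if_neg (by omega)]
  have hMunit : IsUnit M.det := by rw [hMdet]; exact isUnit_one
  have hfull : ∀ (i : Fin 2) (j : Fin n),
      (Finset.univ.val.map (z i)) = z i j ::ₘ ((Finset.univ.erase j).val.map (z i)) := by
    intro i j
    rw [Finset.erase_val, ← Multiset.map_cons,
      Multiset.cons_erase (by simp : j ∈ (Finset.univ : Finset (Fin n)).val)]
  have hkey : ∀ (c : Fin m → k) (i : Fin 2) (j : Fin n),
      (∑ d : Fin m, c d * ((Finset.univ.erase j).val.map (z i)).esymm (d : ℕ))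
        = ∑ t : Fin m, (-(z i j)) ^ (t : ℕ) * (M *ᵥ c) t := by
    intro c i j
    rw [key_sum m c (z i j) (((Finset.univ.erase j)).val.map (z i))]
    refine Finset.sum_congr rfl fun t _ => ?_
    congr 1
    simp only [Matrix.mulVec, dotProduct, hMdef, Matrix.of_apply]
    refine Finset.sum_congr rfl fun d _ => ?_
    congr 1
    rw [← hfull i j]
    split_ifs with hle
    · exact hE i ((d : ℕ) - (t : ℕ)) (by have := d.isLt; omega)
    · rfl
  rw [rank_lt_iff_exists]
  have hSfin : (Set.range (z 0) ∪ Set.range (z 1)).Finite :=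
    (Set.finite_range _).union (Set.finite_range _)
  set T : Finset k := hSfin.toFinset with hTdef
  have hTmem : ∀ (i : Fin 2) (j : Fin n), z i j ∈ T := by
    intro i j
    rw [hTdef, Set.Finite.mem_toFinset]
    fin_cases i
    · exact Or.inl ⟨j, rfl⟩
    · exact Or.inr ⟨j, rfl⟩
  have hcardT : (Set.range (z 0) ∪ Set.range (z 1)).ncard = T.card :=
    Set.ncard_eq_toFinset_card _ hSfin
  constructor
  · rintro ⟨c, hc0, hcB⟩
    set p : Fin m → k := M *ᵥ c with hpdef
    have hp0 : p ≠ 0 := by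
      intro hp
      apply hc0
      have h1 : M⁻¹ *ᵥ (M *ᵥ c) = M⁻¹ *ᵥ 0 := by rw [← hpdef, hp]
      rwa [Matrix.mulVec_mulVec, Matrix.nonsing_inv_mul M hMunit, Matrix.one_mulVec,
        Matrix.mulVec_zero] at h1
    set Q : Polynomial k := ∑ t : Fin m, Polynomial.C (p t) * Polynomial.X ^ (t : ℕ) with hQdef
    have hQcoeff : ∀ t : Fin m, Q.coeff (t : ℕ) = p t := by
      intro t
      rw [hQdef, Polynomial.finset_sum_coeff, Finset.sum_eq_single t]
      · simp [Polynomial.coeff_C_mul, Polynomial.coeff_X_pow]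
      · intro b _ hbt
        simp only [Polynomial.coeff_C_mul, Polynomial.coeff_X_pow]
        rw [if_neg (fun hc => hbt (Fin.ext hc.symm)), mul_zero]
      · simp
    have hQne : Q ≠ 0 := by
      intro hQ
      exact hp0 (funext fun t => by rw [← hQcoeff t, hQ]; simp)
    have hQdeg : Q.natDegree ≤ m - 1 := by
      refine Polynomial.natDegree_sum_le_of_forall_le _ _ fun t _ => ?_
      exact (Polynomial.natDegree_C_mul_X_pow_le _ _).trans (by have := t.isLt; omega)
    have hQeval : ∀ (i : Fin 2) (j : Fin n), Q.eval (-(z i j)) = 0 := by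
      intro i j
      have h1 := hkey c i j
      have h2 : (∑ d : Fin m, c d * ((Finset.univ.erase j).val.map (z i)).esymm (d : ℕ)) = 0 := by
        fin_cases i
        · have h3 := congrFun hcB (Sum.inl j)
          simpa [Matrix.vecMul, dotProduct, Matrix.fromCols, Matrix.of_apply] using h3
        · have h3 := congrFun hcB (Sum.inr j)
          simp only [Matrix.vecMul, dotProduct, Matrix.fromCols, Matrix.of_apply,
            Sum.elim_inr, Matrix.neg_apply, mul_neg, Finset.sum_neg_distrib, neg_eq_zero,
            Pi.zero_apply] at h3
          exact h3
      have h4 : Q.eval (-(z i j)) = ∑ t : Fin m, (-(z i j)) ^ (t : ℕ) * p t := by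
        rw [hQdef]
        simp only [Polynomial.eval_finset_sum, Polynomial.eval_mul, Polynomial.eval_C,
          Polynomial.eval_pow, Polynomial.eval_X]
        exact Finset.sum_congr rfl fun t _ => mul_comm _ _
      rw [h4, ← h1, h2]
    rw [hcardT]
    have hT'card : (T.image fun v => -v).card = T.card :=
      Finset.card_image_of_injective _ neg_injective
    have hsub : (T.image fun v => -v) ⊆ Q.roots.toFinset := by
      intro x hx
      obtain ⟨v, hv, rfl⟩ := Finset.mem_image.mp hx
      rw [Multiset.mem_toFinset, Polynomial.mem_roots']
      refine ⟨hQne, ?_⟩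
      rw [hTdef, Set.Finite.mem_toFinset, Set.mem_union, Set.mem_range, Set.mem_range] at hv
      rcases hv with ⟨j, rfl⟩ | ⟨j, rfl⟩
      · exact hQeval 0 j
      · exact hQeval 1 j
    have := (Finset.card_le_card hsub).trans
      ((Multiset.toFinset_card_le _).trans ((Polynomial.card_roots' Q).trans hQdeg))
    omega
  · intro hcard
    set Q : Polynomial k := ∏ v ∈ T, (Polynomial.X + Polynomial.C v) with hQdef
    have hmon : ∀ v ∈ T, (Polynomial.X + Polynomial.C v).Monic :=
      fun v _ => Polynomial.monic_X_add_C v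
    have hQmonic : Q.Monic := Polynomial.monic_prod_of_monic _ _ hmon
    have hQdeg : Q.natDegree = T.card := by
      rw [hQdef, Polynomial.natDegree_prod_of_monic _ _ hmon]
      simp [Polynomial.natDegree_X_add_C]
    have hdeglt : Q.natDegree < m := by rw [hQdeg]; omega
    set p : Fin m → k := fun t => Q.coeff (t : ℕ) with hpdef
    have hp0 : p ≠ 0 := by
      intro hp
      have h1 := congrFun hp ⟨Q.natDegree, hdeglt⟩
      simp only [hpdef, Pi.zero_apply] at h1
      rw [Polynomial.coeff_natDegree, hQmonic.leadingCoeff] at h1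
      exact one_ne_zero h1
    refine ⟨M⁻¹ *ᵥ p, ?_, ?_⟩
    · intro hc
      apply hp0
      have h1 : M *ᵥ (M⁻¹ *ᵥ p) = M *ᵥ 0 := by rw [hc]
      rwa [Matrix.mulVec_mulVec, Matrix.mul_nonsing_inv M hMunit, Matrix.one_mulVec,
        Matrix.mulVec_zero] at h1
    · have hMc : M *ᵥ (M⁻¹ *ᵥ p) = p := by
        rw [Matrix.mulVec_mulVec, Matrix.mul_nonsing_inv M hMunit, Matrix.one_mulVec]
      have hQeval : ∀ (i : Fin 2) (j : Fin n), Q.eval (-(z i j)) = 0 := by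
        intro i j
        rw [hQdef, Polynomial.eval_prod]
        refine Finset.prod_eq_zero (hTmem i j) ?_
        simp
      have hev : ∀ x : k, Q.eval x = ∑ t : Fin m, x ^ (t : ℕ) * p t := by
        intro x
        rw [Polynomial.eval_eq_sum_range' hdeglt x,
          ← Fin.sum_univ_eq_sum_range (fun i => Q.coeff i * x ^ i) m]
        exact Finset.sum_congr rfl fun t _ => mul_comm _ _
      funext x
      cases x with
      | inl j =>
        have h1 := hkey (M⁻¹ *ᵥ p) 0 j
        rw [hMc] at h1
        simp only [Matrix.vecMul, dotProduct, Matrix.fromCols, Matrix.of_apply,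
          Sum.elim_inl, Pi.zero_apply]
        rw [h1, ← hev, hQeval 0 j]
      | inr j =>
        have h1 := hkey (M⁻¹ *ᵥ p) 1 j
        rw [hMc] at h1
        simp only [Matrix.vecMul, dotProduct, Matrix.fromCols, Matrix.of_apply,
          Sum.elim_inr, Matrix.neg_apply, mul_neg, Finset.sum_neg_distrib, Pi.zero_apply,
          neg_eq_zero]
        rw [h1, ← hev, hQeval 1 j]
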